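/- arXiv:1808.05662 — 2 statements merged into one kernel-verified Lean document; each statement's English description precedes it below -/
import Mathlib

section
/- Let G = (V, E, c) be a connected weighted graph and let V' ⊆ V be a nonempty subset whose induced subgraph G' is connected, with edge set E'. Then the sum over e ∈ E' of R_e(G)·c_e is at most |V'| - 1, where R_e(G) is the effective resistance of edge e computed in the full graph G. -/
open Matrix

/-- `P` is the Moore–Penrose pseudoinverse of `A`: the four Penrose conditions. -/
def IsMoorePenrose {V : Type*} [Fintype V] [DecidableEq V]
    (A P : Matrix V V ℝ) : Prop :=
  A * P * A = A ∧ P * A * P = P ∧ (A * P)ᵀ = A * P ∧ (P * A)ᵀ = P * A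

/-- The weighted graph Laplacian of a weight function `c`. -/
def Lap {V : Type*} [Fintype V] [DecidableEq V] (c : V → V → ℝ) : Matrix V V ℝ :=
  Matrix.of fun i j => if i = j then ∑ k, c i k else -(c i j)

/-- The signed incidence vector of the pair `(i, j)`. -/
def chi {V : Type*} [DecidableEq V] (i j : V) : V → ℝ :=
  fun k => if k = i then 1 else if k = j then -1 else 0

section Aux

variable {V : Type*} [Fintype V] [DecidableEq V]

lemma Lap_mulVec (c : V → V → ℝ) (hd : ∀ i, c i i = 0) (x : V → ℝ) (i : V) :
    (Lap c *ᵥ x) i = ∑ j, c i j * (x i - x j) := by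
  simp only [Lap, mulVec, dotProduct, of_apply]
  rw [Finset.sum_congr rfl (fun j _ => by
    show (if i = j then ∑ k, c i k else -(c i j)) * x j =
      (if i = j then (∑ k, c i k) * x i else 0) + (-(c i j) * x j) + (if i = j then c i j * x j else 0)
    split_ifs with h
    · subst h; rw [hd]; ring
    · ring)]
  simp only [Finset.sum_add_distrib, Finset.sum_ite_eq, Finset.mem_univ, if_true, hd]
  rw [Finset.sum_mul]
  simp only [mul_sub, neg_mul, Finset.sum_neg_distrib, Finset.sum_sub_distrib]
  ring

lemma Lap_quad (c : V → V → ℝ) (hd : ∀ i, c i i = 0) (hs : ∀ i j, c i j = c j i)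
    (x : V → ℝ) :
    x ⬝ᵥ (Lap c *ᵥ x) = (∑ i, ∑ j, c i j * (x i - x j) ^ 2) / 2 := by
  have key : ∑ i, ∑ j, c i j * (x j * (x i - x j))
      = -∑ i, ∑ j, c i j * (x i * (x i - x j)) := by
    rw [Finset.sum_comm, ← Finset.sum_neg_distrib]
    refine Finset.sum_congr rfl fun j _ => ?_
    rw [← Finset.sum_neg_distrib]
    refine Finset.sum_congr rfl fun i _ => ?_
    rw [hs i j]; ring
  have lhs : x ⬝ᵥ (Lap c *ᵥ x) = ∑ i, ∑ j, c i j * (x i * (x i - x j)) := by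
    simp only [dotProduct]
    refine Finset.sum_congr rfl fun i _ => ?_
    rw [Lap_mulVec c hd, Finset.mul_sum]
    exact Finset.sum_congr rfl fun j _ => by ring
  rw [lhs]
  have : ∑ i, ∑ j, c i j * (x i - x j) ^ 2
      = ∑ i, ∑ j, c i j * (x i * (x i - x j)) - ∑ i, ∑ j, c i j * (x j * (x i - x j)) := by
    rw [← Finset.sum_sub_distrib]
    refine Finset.sum_congr rfl fun i _ => ?_
    rw [← Finset.sum_sub_distrib]
    exact Finset.sum_congr rfl fun j _ => by ring
  rw [this, key]; ring

lemma Lap_isHermitian (c : V → V → ℝ) (hs : ∀ i j, c i j = c j i) :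
    (Lap c).IsHermitian := by
  ext i j
  simp only [Lap, conjTranspose_apply, of_apply, star_trivial]
  rcases eq_or_ne i j with h | h
  · subst h; simp
  · rw [if_neg (Ne.symm h), if_neg h, hs]

lemma Lap_transpose (c : V → V → ℝ) (hs : ∀ i j, c i j = c j i) :
    (Lap c)ᵀ = Lap c := by
  have h := Lap_isHermitian c hs
  ext i j
  have := congrFun (congrFun h i) j
  simpa [conjTranspose_apply, star_trivial, transpose_apply] using this

lemma chi_quad (M : Matrix V V ℝ) {i j : V} (h : i ≠ j) :
    chi i j ⬝ᵥ (M *ᵥ chi i j) = M i i - M i j - M j i + M j j := by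
  have hc : chi i j = (Pi.single i 1 : V → ℝ) - Pi.single j 1 := by
    ext k
    simp only [chi, Pi.sub_apply, Pi.single_apply]
    rcases eq_or_ne k i with rfl | hk
    · simp [if_neg (fun hh : k = j => h hh), if_neg (fun hh : j = k => h hh.symm)]
    · simp only [if_neg hk, if_neg (fun hh : i = k => hk hh.symm)]
      split_ifs <;> ring
  rw [hc]
  simp [mulVec_sub, dotProduct_sub, sub_dotProduct, mulVec_single, single_dotProduct]
  ring

lemma MP_unique {A P Q : Matrix V V ℝ} (hP : IsMoorePenrose A P)
    (hQ : IsMoorePenrose A Q) : P = Q := by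
  obtain ⟨hP1, hP2, hP3, hP4⟩ := hP
  obtain ⟨hQ1, hQ2, hQ3, hQ4⟩ := hQ
  have hAP : A * P = A * Q := by
    calc A * P = (A * Q * A) * P := by rw [hQ1]
    _ = (A * Q) * (A * P) := by noncomm_ring
    _ = (A * Q)ᵀ * (A * P)ᵀ := by rw [hQ3, hP3]
    _ = ((A * P) * (A * Q))ᵀ := (transpose_mul _ _).symm
    _ = ((A * P * A) * Q)ᵀ := by rw [show A * P * (A * Q) = (A * P * A) * Q by noncomm_ring]
    _ = (A * Q)ᵀ := by rw [hP1]
    _ = A * Q := hQ3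
  have hPA : P * A = Q * A := by
    calc P * A = P * (A * Q * A) := by rw [hQ1]
    _ = (P * A) * (Q * A) := by noncomm_ring
    _ = (P * A)ᵀ * (Q * A)ᵀ := by rw [hP4, hQ4]
    _ = ((Q * A) * (P * A))ᵀ := (transpose_mul _ _).symm
    _ = (Q * (A * P * A))ᵀ := by rw [show Q * A * (P * A) = Q * (A * P * A) by noncomm_ring]
    _ = (Q * A)ᵀ := by rw [hP1]
    _ = Q * A := hQ4
  calc P = P * A * P := hP2.symm
  _ = P * (A * Q) := by rw [mul_assoc, hAP]
  _ = (P * A) * Q := by rw [mul_assoc]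
  _ = (Q * A) * Q := by rw [hPA]
  _ = Q := hQ2

lemma MP_transpose_symm {A P : Matrix V V ℝ} (hA : Aᵀ = A)
    (hP : IsMoorePenrose A P) : Pᵀ = P := by
  obtain ⟨hP1, hP2, hP3, hP4⟩ := hP
  have hQ : IsMoorePenrose A Pᵀ := by
    refine ⟨?_, ?_, ?_, ?_⟩
    · calc A * Pᵀ * A = (Aᵀ * P * Aᵀ)ᵀ := by simp [transpose_mul, mul_assoc]
      _ = (A * P * A)ᵀ := by rw [hA]
      _ = Aᵀ := by rw [hP1]
      _ = A := hA
    · calc Pᵀ * A * Pᵀ = (Pᵀ * Aᵀ) * Pᵀ := by rw [hA]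
      _ = (P * A * P)ᵀ := by simp [transpose_mul, mul_assoc]
      _ = Pᵀ := by rw [hP2]
    · calc (A * Pᵀ)ᵀ = P * Aᵀ := by simp [transpose_mul]
      _ = P * A := by rw [hA]
      _ = (P * A)ᵀ := hP4.symm
      _ = Aᵀ * Pᵀ := by simp [transpose_mul]
      _ = A * Pᵀ := by rw [hA]
    · calc (Pᵀ * A)ᵀ = Aᵀ * P := by simp [transpose_mul]
      _ = A * P := by rw [hA]
      _ = (A * P)ᵀ := hP3.symm
      _ = Pᵀ * Aᵀ := by simp [transpose_mul]
      _ = Pᵀ * A := by rw [hA]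
  exact MP_unique hQ ⟨hP1, hP2, hP3, hP4⟩

lemma spectral_real (B : Matrix V V ℝ) (hB : B.IsHermitian) :
    B = (hB.eigenvectorUnitary : Matrix V V ℝ) * diagonal hB.eigenvalues
        * (hB.eigenvectorUnitary : Matrix V V ℝ)ᵀ := by
  have h := hB.spectral_theorem
  have e : ((hB.eigenvectorUnitary : Matrix V V ℝ)ᵀ).map (starRingEnd ℝ)
      = (hB.eigenvectorUnitary : Matrix V V ℝ)ᵀ := by ext i j; simp
  simpa [star_eq_conjTranspose, conjTranspose, e] using h

lemma spectral_quad (B : Matrix V V ℝ) (hB : B.IsHermitian) (x : V → ℝ) :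
    x ⬝ᵥ (B *ᵥ x) = ∑ k, hB.eigenvalues k *
      ((fun i => (hB.eigenvectorUnitary : Matrix V V ℝ) i k) ⬝ᵥ x) ^ 2 := by
  set U := (hB.eigenvectorUnitary : Matrix V V ℝ) with hU
  have hy : ∀ k, (Uᵀ *ᵥ x) k = (fun i => U i k) ⬝ᵥ x := by
    intro k; simp [mulVec, dotProduct, transpose_apply]
  conv_lhs => rw [spectral_real B hB]
  rw [← hU, ← mulVec_mulVec, ← mulVec_mulVec]
  rw [Matrix.dotProduct_mulVec x U, ← Matrix.mulVec_transpose]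
  set y := Uᵀ *ᵥ x with hy'
  have : y ⬝ᵥ (diagonal hB.eigenvalues *ᵥ y) = ∑ k, hB.eigenvalues k * (y k) ^ 2 := by
    simp [dotProduct, mulVec_diagonal]
    exact Finset.sum_congr rfl fun k _ => by ring
  rw [this]
  exact Finset.sum_congr rfl fun k _ => by rw [hy k]

lemma trace_diagonal_mul (d : V → ℝ) (M : Matrix V V ℝ) :
    (diagonal d * M).trace = ∑ k, d k * M k k := by
  simp [Matrix.trace, Matrix.mul_apply, diagonal_apply, ite_mul, zero_mul]

lemma spectral_trace (B : Matrix V V ℝ) (hB : B.IsHermitian) (P : Matrix V V ℝ) :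
    (B * P).trace = ∑ k, hB.eigenvalues k *
      ((fun i => (hB.eigenvectorUnitary : Matrix V V ℝ) i k) ⬝ᵥ
        (P *ᵥ fun i => (hB.eigenvectorUnitary : Matrix V V ℝ) i k)) := by
  set U := (hB.eigenvectorUnitary : Matrix V V ℝ) with hU
  conv_lhs => rw [spectral_real B hB, ← hU]
  rw [show U * diagonal hB.eigenvalues * Uᵀ * P
      = U * (diagonal hB.eigenvalues * Uᵀ * P) by noncomm_ring]
  rw [Matrix.trace_mul_comm]
  rw [show diagonal hB.eigenvalues * Uᵀ * P * U
      = diagonal hB.eigenvalues * (Uᵀ * (P * U)) by noncomm_ring]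
  rw [trace_diagonal_mul]
  refine Finset.sum_congr rfl fun k _ => ?_
  simp only [Matrix.mul_apply, transpose_apply, mulVec, dotProduct, Finset.mul_sum,
    Finset.sum_mul]

lemma eigenvalue_eq_quad (B : Matrix V V ℝ) (hB : B.IsHermitian) (k : V) :
    hB.eigenvalues k = (fun i => (hB.eigenvectorUnitary : Matrix V V ℝ) i k) ⬝ᵥ
      (B *ᵥ fun i => (hB.eigenvectorUnitary : Matrix V V ℝ) i k) := by
  have h := hB.eigenvalues_eq k
  simpa [Matrix.IsHermitian.eigenvectorUnitary_apply] using h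

lemma rank_add_ker (B : Matrix V V ℝ) :
    B.rank + Module.finrank ℝ (LinearMap.ker B.mulVecLin) = Fintype.card V := by
  rw [Matrix.rank, LinearMap.finrank_range_add_finrank_ker]
  simp [Module.finrank_pi]

lemma finrank_ker_ge (B : Matrix V V ℝ) (V' : Finset V) (hne : V'.Nonempty)
    (h1 : B.mulVecLin (fun i => if i ∈ V' then 1 else 0) = 0)
    (h2 : ∀ v : V, v ∉ V' → B.mulVecLin (Pi.single v 1) = 0) :
    Fintype.card V - V'.card + 1 ≤ Module.finrank ℝ (LinearMap.ker B.mulVecLin) := by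
  classical
  set f : Option {x : V // x ∉ V'} → (V → ℝ) := fun a =>
    a.elim (fun i => if i ∈ V' then 1 else 0) (fun w => Pi.single w.1 1) with hf
  have hmem : ∀ a, f a ∈ LinearMap.ker B.mulVecLin := by
    rintro (_ | ⟨v, hv⟩)
    · exact LinearMap.mem_ker.2 h1
    · exact LinearMap.mem_ker.2 (h2 v hv)
  have hli : LinearIndependent ℝ f := by
    rw [Fintype.linearIndependent_iff]
    intro g hg
    have hval : ∀ v : V, (∑ a, g a • f a) v = 0 := fun v => by rw [hg]; rfl
    have hsome : ∀ (v : V) (hv : v ∉ V'), g (some ⟨v, hv⟩) = 0 := by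
      intro v hv
      have := hval v
      rw [Finset.sum_apply, Fintype.sum_option] at this
      simp only [hf, Option.elim, Pi.smul_apply, smul_eq_mul, if_neg hv, mul_zero,
        zero_add] at this
      rwa [Finset.sum_eq_single (⟨v, hv⟩ : {x : V // x ∉ V'})
        (fun w _ hw => by
          have : v ≠ w.1 := fun h => hw (Subtype.ext h.symm)
          simp [Pi.single_apply, this])
        (fun h => absurd (Finset.mem_univ _) h), Pi.single_apply, if_pos rfl, mul_one] at this
    intro a
    match a with
    | some ⟨v, hv⟩ => exact hsome v hv
    | none =>
      obtain ⟨v0, hv0⟩ := hne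
      have := hval v0
      rw [Finset.sum_apply, Fintype.sum_option] at this
      simp only [hf, Option.elim, Pi.smul_apply, smul_eq_mul, if_pos hv0, mul_one] at this
      rwa [Finset.sum_eq_zero (fun w _ => by
        have : v0 ≠ w.1 := fun h => w.2 (h ▸ hv0)
        simp [Pi.single_apply, this]), add_zero] at this
  have hspan : Submodule.span ℝ (Set.range f) ≤ LinearMap.ker B.mulVecLin :=
    Submodule.span_le.2 (Set.range_subset_iff.2 hmem)
  have := Submodule.finrank_mono hspan
  rw [finrank_span_eq_card hli] at this
  have hcard : Fintype.card (Option {x : V // x ∉ V'}) = (Fintype.card V - V'.card) + 1 := by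
    rw [Fintype.card_option, Fintype.card_subtype_compl]
    simp [Fintype.card_coe]
  omega

end Aux

/-- Let `G` be a connected weighted graph and `V'` a nonempty vertex subset whose
induced subgraph is connected.  Then the sum over edges `e` of the induced subgraph of
`R_e(G) * c_e` is at most `|V'| - 1`, where `R_e(G)` is the effective resistance in
the full graph.  (Each unordered edge appears twice in the double sum.) -/
theorem stmt_12 {V : Type*} [Fintype V] [DecidableEq V]
    (G : SimpleGraph V) (hconn : G.Connected)
    (c : V → V → ℝ) (hsymm : ∀ i j, c i j = c j i)
    (hpos : ∀ i j, G.Adj i j → 0 < c i j)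
    (hzero : ∀ i j, ¬ G.Adj i j → c i j = 0)
    (P : Matrix V V ℝ) (hP : IsMoorePenrose (Lap c) P)
    (V' : Finset V) (hne : V'.Nonempty)
    (hconn' : (G.induce (V' : Set V)).Connected) :
    (∑ i ∈ V', ∑ j ∈ V', c i j * (chi i j ⬝ᵥ P.mulVec (chi i j))) / 2
      ≤ (V'.card : ℝ) - 1 := by
  classical
  -- basic properties of the weights
  have hcnn : ∀ i j, 0 ≤ c i j := by
    intro i j
    by_cases h : G.Adj i j
    · exact (hpos i j h).le
    · rw [hzero i j h]
  have hcd : ∀ i, c i i = 0 := fun i => hzero i i (G.irrefl)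
  set c' : V → V → ℝ := fun i j => if i ∈ V' ∧ j ∈ V' then c i j else 0 with hc'
  have hc's : ∀ i j, c' i j = c' j i := by
    intro i j; simp only [hc']
    by_cases hi : i ∈ V' <;> by_cases hj : j ∈ V' <;> simp [hi, hj, hsymm i j]
  have hc'd : ∀ i, c' i i = 0 := by
    intro i; simp only [hc']; split_ifs <;> simp [hcd]
  have hc'nn : ∀ i j, 0 ≤ c' i j := by
    intro i j; simp only [hc']; split_ifs <;> [exact hcnn i j; rfl]
  have hc'le : ∀ i j, c' i j ≤ c i j := by
    intro i j; simp only [hc']; split_ifs <;> [rfl; exact hcnn i j]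
  set A : Matrix V V ℝ := Lap c with hAdef
  set B : Matrix V V ℝ := Lap c' with hBdef
  have hAt : Aᵀ = A := Lap_transpose c hsymm
  have hPs : Pᵀ = P := MP_transpose_symm hAt hP
  obtain ⟨hP1, hP2, hP3, hP4⟩ := hP
  have hB : B.IsHermitian := Lap_isHermitian c' hc's
  set U := (hB.eigenvectorUnitary : Matrix V V ℝ) with hU
  set μ := hB.eigenvalues with hμ
  set u : V → V → ℝ := fun k => (fun i => U i k) with hudef
  -- Step 1: rewrite LHS sum with c'
  have step1 : ∑ i ∈ V', ∑ j ∈ V', c i j * (chi i j ⬝ᵥ P.mulVec (chi i j))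
      = ∑ i, ∑ j, c' i j * (chi i j ⬝ᵥ P.mulVec (chi i j)) := by
    rw [Finset.sum_congr rfl (fun i _ => Finset.sum_congr rfl (fun j (hj : j ∈ V') => rfl))]
    symm
    rw [Finset.sum_congr rfl (fun i (_ : i ∈ Finset.univ) => show
        ∑ j, c' i j * (chi i j ⬝ᵥ P.mulVec (chi i j))
        = if i ∈ V' then ∑ j ∈ V', c i j * (chi i j ⬝ᵥ P.mulVec (chi i j)) else 0 from by
      by_cases hi : i ∈ V'
      · rw [if_pos hi]
        rw [show (∑ j, c' i j * (chi i j ⬝ᵥ P.mulVec (chi i j)))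
            = ∑ j, if j ∈ V' then c i j * (chi i j ⬝ᵥ P.mulVec (chi i j)) else 0 from
          Finset.sum_congr rfl fun j _ => by
            simp only [hc']; by_cases hj : j ∈ V' <;> simp [hi, hj]]
        rw [Finset.sum_ite_mem, Finset.univ_inter]
      · rw [if_neg hi]
        refine Finset.sum_eq_zero fun j _ => ?_
        simp only [hc']
        rw [if_neg (fun h => hi h.1), zero_mul])]
    rw [Finset.sum_ite_mem, Finset.univ_inter]
  -- Step 2: the sum is twice the trace of B * P
  have swap : ∀ F : V → V → ℝ, ∑ i, ∑ j, c' i j * F j i = ∑ i, ∑ j, c' i j * F i j := by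
    intro F
    rw [Finset.sum_comm]
    refine Finset.sum_congr rfl fun j _ => Finset.sum_congr rfl fun i _ => ?_
    rw [hc's i j]
  have step2 : ∑ i, ∑ j, c' i j * (chi i j ⬝ᵥ P.mulVec (chi i j)) = 2 * (B * P).trace := by
    have tr : (B * P).trace = ∑ i, ∑ j, c' i j * (P i i - P j i) := by
      rw [Matrix.trace]
      refine Finset.sum_congr rfl fun i _ => ?_
      have := Lap_mulVec c' hc'd (fun j => P j i) i
      simpa [mulVec, dotProduct, Matrix.mul_apply, diag_apply] using this
    have expand : ∑ i, ∑ j, c' i j * (chi i j ⬝ᵥ P.mulVec (chi i j))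
        = ∑ i, ∑ j, c' i j * (P i i - P i j - P j i + P j j) := by
      refine Finset.sum_congr rfl fun i _ => Finset.sum_congr rfl fun j _ => ?_
      rcases eq_or_ne i j with rfl | hij
      · rw [hc'd i, zero_mul, zero_mul]
      · rw [chi_quad P hij]
    rw [expand]
    have split : ∑ i, ∑ j, c' i j * (P i i - P i j - P j i + P j j)
        = (∑ i, ∑ j, c' i j * (P i i - P j i)) + ∑ i, ∑ j, c' i j * (P j j - P i j) := by
      rw [← Finset.sum_add_distrib]
      refine Finset.sum_congr rfl fun i _ => ?_
      rw [← Finset.sum_add_distrib]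
      exact Finset.sum_congr rfl fun j _ => by ring
    rw [split, swap (fun i j => P i i - P j i), tr]
    ring
  -- Step 3: eigenvalues are nonnegative
  have hquadB : ∀ x : V → ℝ, x ⬝ᵥ (B *ᵥ x) = (∑ i, ∑ j, c' i j * (x i - x j) ^ 2) / 2 :=
    fun x => Lap_quad c' hc'd hc's x
  have hquadA : ∀ x : V → ℝ, x ⬝ᵥ (A *ᵥ x) = (∑ i, ∑ j, c i j * (x i - x j) ^ 2) / 2 :=
    fun x => Lap_quad c hcd hsymm x
  have hBpsd : ∀ x : V → ℝ, 0 ≤ x ⬝ᵥ (B *ᵥ x) := by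
    intro x
    rw [hquadB x]
    apply div_nonneg _ (by norm_num)
    exact Finset.sum_nonneg fun i _ => Finset.sum_nonneg fun j _ =>
      mul_nonneg (hc'nn i j) (sq_nonneg _)
  have hμnn : ∀ k, 0 ≤ μ k := by
    intro k
    rw [hμ, eigenvalue_eq_quad B hB k]
    exact hBpsd _
  have hBA : ∀ x : V → ℝ, x ⬝ᵥ (B *ᵥ x) ≤ x ⬝ᵥ (A *ᵥ x) := by
    intro x
    rw [hquadB x, hquadA x]
    apply div_le_div_of_nonneg_right ?_ (by norm_num)
    exact Finset.sum_le_sum fun i _ => Finset.sum_le_sum fun j _ =>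
      mul_le_mul_of_nonneg_right (hc'le i j) (sq_nonneg _)
  -- Step 4: each term μ k * q k is at most the indicator of μ k ≠ 0
  have step4 : ∀ k, μ k * (u k ⬝ᵥ (P *ᵥ u k)) ≤ if μ k ≠ 0 then (1 : ℝ) else 0 := by
    intro k
    by_cases hk : μ k = 0
    · simp [hk]
    · rw [if_pos hk]
      have hkpos : 0 < μ k := lt_of_le_of_ne (hμnn k) (Ne.symm hk)
      set q : ℝ := u k ⬝ᵥ (P *ᵥ u k) with hq
      set x : V → ℝ := P *ᵥ u k with hx
      have h1 : μ k * (u k ⬝ᵥ x) ^ 2 ≤ x ⬝ᵥ (B *ᵥ x) := by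
        rw [spectral_quad B hB x]
        refine Finset.single_le_sum (f := fun j => μ j * ((u j) ⬝ᵥ x) ^ 2)
          (fun j _ => mul_nonneg (hμnn j) (sq_nonneg _)) (Finset.mem_univ k)
      have h3 : x ⬝ᵥ (A *ᵥ x) = q := by
        calc x ⬝ᵥ (A *ᵥ x) = x ⬝ᵥ ((A * P) *ᵥ u k) := by rw [hx, mulVec_mulVec]
        _ = ((P *ᵥ u k) ⬝ᵥ ((A * P) *ᵥ u k)) := rfl
        _ = u k ⬝ᵥ (Pᵀ *ᵥ ((A * P) *ᵥ u k)) := by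
          rw [dotProduct_comm, Matrix.dotProduct_mulVec, Matrix.mulVec_transpose,
            dotProduct_comm]
        _ = u k ⬝ᵥ ((Pᵀ * (A * P)) *ᵥ u k) := by rw [mulVec_mulVec]
        _ = u k ⬝ᵥ ((P * A * P) *ᵥ u k) := by rw [hPs, mul_assoc]
        _ = u k ⬝ᵥ (P *ᵥ u k) := by rw [hP2]
      have hkey : μ k * q ^ 2 ≤ q := by
        have h := (h1.trans (hBA x)).trans_eq h3
        rwa [← hq] at h
      rcases le_or_gt q 0 with hq0 | hq0
      · exact (mul_nonpos_of_nonneg_of_nonpos (hμnn k) hq0).trans (by norm_num)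
      · nlinarith
  -- Step 5: kernel vectors of B
  have hker1 : B.mulVecLin (fun i => if i ∈ V' then 1 else 0) = 0 := by
    rw [Matrix.mulVecLin_apply]
    funext i
    rw [show (0 : V → ℝ) i = 0 from rfl, Lap_mulVec c' hc'd]
    refine Finset.sum_eq_zero fun j _ => ?_
    simp only [hc']
    by_cases hi : i ∈ V' <;> by_cases hj : j ∈ V' <;> simp [hi, hj]
  have hker2 : ∀ v : V, v ∉ V' → B.mulVecLin (Pi.single v 1) = 0 := by
    intro v hv
    rw [Matrix.mulVecLin_apply]
    funext i
    rw [show (0 : V → ℝ) i = 0 from rfl, Lap_mulVec c' hc'd]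
    refine Finset.sum_eq_zero fun j _ => ?_
    rcases eq_or_ne i v with rfl | hiv
    · simp only [hc']
      rw [if_neg (fun h => hv h.1), zero_mul]
    · rcases eq_or_ne j v with rfl | hjv
      · simp only [hc']
        rw [if_neg (fun h => hv h.2), zero_mul]
      · simp [Pi.single_apply, hiv, hjv]
  -- Step 6: rank bound
  have hrank : B.rank + 1 ≤ V'.card := by
    have h1 := rank_add_ker B
    have h2 := finrank_ker_ge B V' hne hker1 hker2
    have h3 : V'.card ≤ Fintype.card V := Finset.card_le_univ V'
    omega
  have hcount : (∑ k, if μ k ≠ 0 then (1 : ℝ) else 0) = (B.rank : ℝ) := by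
    rw [hB.rank_eq_card_non_zero_eigs]
    rw [Finset.sum_boole, Fintype.card_subtype]
  -- put everything together
  rw [step1, step2]
  rw [mul_comm, mul_div_assoc]
  norm_num
  calc (B * P).trace = ∑ k, μ k * (u k ⬝ᵥ (P *ᵥ u k)) := spectral_trace B hB P
  _ ≤ ∑ k, (if μ k ≠ 0 then (1 : ℝ) else 0) := Finset.sum_le_sum fun k _ => step4 k
  _ = (B.rank : ℝ) := hcount
  _ ≤ (V'.card : ℝ) - 1 := by
    have : (B.rank : ℝ) + 1 ≤ (V'.card : ℝ) := by exact_mod_cast hrank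
    linarith
end

section
/- Let G be a weighted graph in which every edge e satisfies R_e(G)·c_e ≥ δ for some δ > 0, where R_e is the effective resistance and c_e the conductance of e. Then G is (1/δ)-uniformly sparse: every nonempty vertex subset V' induces at most (|V'|-1)/δ edges. -/
open Matrix

attribute [local instance] Classical.propDecidable

section Aux

variable {V : Type*} [Fintype V] [DecidableEq V]

lemma dot_self_nonneg (x : V → ℝ) : 0 ≤ x ⬝ᵥ x :=
  Finset.sum_nonneg fun i _ => mul_self_nonneg _

lemma chi_dot (i j : V) (h : i ≠ j) (x : V → ℝ) :
    chi i j ⬝ᵥ x = x i - x j := by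
  have hk : ∀ k, chi i j k * x k
      = (if k = i then x i else 0) + (if k = j then -x j else 0) := by
    intro k
    by_cases h1 : k = i <;> by_cases h2 : k = j <;> simp [chi, h1, h2] <;> simp_all
  simp only [dotProduct, hk, Finset.sum_add_distrib, Finset.sum_ite_eq',
    Finset.mem_univ, if_true]
  ring

lemma vecMulVec_mulVec (v w x : V → ℝ) :
    (Matrix.vecMulVec v w).mulVec x = (w ⬝ᵥ x) • v := by
  ext i
  simp only [Matrix.vecMulVec, Matrix.mulVec, dotProduct, Matrix.of_apply,
    Pi.smul_apply, smul_eq_mul, Finset.sum_mul, Finset.mul_sum]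
  exact Finset.sum_congr rfl fun j _ => by ring

lemma trace_mul_vecMulVec (P : Matrix V V ℝ) (v w : V → ℝ) :
    Matrix.trace (P * Matrix.vecMulVec v w) = w ⬝ᵥ P.mulVec v := by
  simp only [Matrix.trace, Matrix.diag, Matrix.mul_apply, Matrix.vecMulVec, dotProduct,
    Matrix.mulVec, Matrix.of_apply, Finset.mul_sum]
  refine Finset.sum_congr rfl fun i _ => Finset.sum_congr rfl fun j _ => by ring

lemma sum_mulVec {ι : Type*} (s : Finset ι) (f : ι → Matrix V V ℝ) (x : V → ℝ) :
    (∑ i ∈ s, f i).mulVec x = ∑ i ∈ s, (f i).mulVec x := by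
  ext k
  simp only [Matrix.mulVec, dotProduct, Matrix.sum_apply, Finset.sum_apply,
    Finset.sum_mul]
  rw [Finset.sum_comm]

lemma lap_mulVec (c : V → V → ℝ) (hdiag : ∀ i, c i i = 0) (x : V → ℝ) (i : V) :
    (Lap c).mulVec x i = (∑ k, c i k) * x i - ∑ j, c i j * x j := by
  have hk : ∀ j, Lap c i j * x j
      = (if j = i then (∑ k, c i k) * x i else 0) - c i j * x j
        + (if j = i then c i i * x i else 0) := by
    intro j
    by_cases h1 : j = i
    · subst h1; simp [Lap, hdiag]
    · simp [Lap, h1, (Ne.symm h1 : i ≠ j)]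
  simp only [Matrix.mulVec, dotProduct, hk, Finset.sum_add_distrib,
    Finset.sum_sub_distrib, Finset.sum_ite_eq', Finset.mem_univ, if_true, hdiag]
  ring

lemma lap_quad (c : V → V → ℝ) (hsymm : ∀ i j, c i j = c j i) (hdiag : ∀ i, c i i = 0)
    (x : V → ℝ) :
    2 * (x ⬝ᵥ (Lap c).mulVec x) = ∑ i, ∑ j, c i j * (x i - x j) ^ 2 := by
  have hswap : ∑ i, ∑ j, c i j * x j ^ 2 = ∑ i, ∑ j, c i j * x i ^ 2 := by
    rw [Finset.sum_comm]
    exact Finset.sum_congr rfl fun i _ => Finset.sum_congr rfl fun j _ => by rw [hsymm]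
  have lhs : x ⬝ᵥ (Lap c).mulVec x
      = (∑ i, ∑ j, c i j * x i ^ 2) - ∑ i, ∑ j, c i j * (x i * x j) := by
    simp only [dotProduct, lap_mulVec c hdiag]
    rw [← Finset.sum_sub_distrib]
    refine Finset.sum_congr rfl fun i _ => ?_
    simp only [mul_sub, Finset.sum_mul, Finset.mul_sum, ← Finset.sum_sub_distrib]
    refine Finset.sum_congr rfl fun j _ => by ring
  have rhs : ∑ i, ∑ j, c i j * (x i - x j) ^ 2
      = ∑ i, ∑ j, (c i j * x i ^ 2 + c i j * x j ^ 2 - 2 * (c i j * (x i * x j))) :=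
    Finset.sum_congr rfl fun i _ => Finset.sum_congr rfl fun j _ => by ring
  rw [rhs]
  simp only [Finset.sum_add_distrib, Finset.sum_sub_distrib, ← Finset.mul_sum]
  rw [lhs, hswap]; ring

lemma dot_sandwich (S A : Matrix V V ℝ) (hS : Sᵀ = S) (x : V → ℝ) :
    x ⬝ᵥ (S * A * S).mulVec x = (S.mulVec x) ⬝ᵥ A.mulVec (S.mulVec x) := by
  rw [← Matrix.mulVec_mulVec, ← Matrix.mulVec_mulVec, dotProduct_mulVec x S,
    ← Matrix.mulVec_transpose, hS]

lemma proj_dot_le (Pr : Matrix V V ℝ) (hsym : Prᵀ = Pr) (hidem : Pr * Pr = Pr)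
    (hpsd : ∀ y : V → ℝ, 0 ≤ y ⬝ᵥ Pr.mulVec y) (x : V → ℝ) :
    x ⬝ᵥ Pr.mulVec x ≤ x ⬝ᵥ x := by
  have hww : (Pr.mulVec x) ⬝ᵥ (Pr.mulVec x) = x ⬝ᵥ Pr.mulVec x := by
    conv_lhs => rw [dotProduct_mulVec, ← Matrix.mulVec_transpose, hsym,
      Matrix.mulVec_mulVec, hidem]
    exact dotProduct_comm _ _
  have ht0 : 0 ≤ x ⬝ᵥ Pr.mulVec x := hpsd x
  have hcs : (x ⬝ᵥ Pr.mulVec x) ^ 2 ≤ (x ⬝ᵥ x) * (x ⬝ᵥ Pr.mulVec x) := by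
    have h1 : (∑ i, x i * Pr.mulVec x i) ^ 2
        ≤ (∑ i, x i ^ 2) * ∑ i, Pr.mulVec x i ^ 2 :=
      Finset.sum_mul_sq_le_sq_mul_sq Finset.univ x (Pr.mulVec x)
    have e1 : ∑ i, x i * Pr.mulVec x i = x ⬝ᵥ Pr.mulVec x := rfl
    have e2 : ∑ i, x i ^ 2 = x ⬝ᵥ x := by simp [dotProduct, sq]
    have e3 : ∑ i, Pr.mulVec x i ^ 2 = x ⬝ᵥ Pr.mulVec x := by
      rw [← hww]; simp [dotProduct, sq]
    rw [e1, e2, e3] at h1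
    exact h1
  rcases eq_or_lt_of_le ht0 with h | h
  · rw [← h]; exact dot_self_nonneg x
  · nlinarith

lemma mp_unique (A P Q : Matrix V V ℝ) (hP : IsMoorePenrose A P)
    (hQ : IsMoorePenrose A Q) : P = Q := by
  obtain ⟨p1, p2, p3, p4⟩ := hP
  obtain ⟨q1, q2, q3, q4⟩ := hQ
  have h1 : A * P = A * Q := by
    calc A * P = (A * P)ᵀ := p3.symm
      _ = (A * Q * A * P)ᵀ := by rw [q1]
      _ = (A * P)ᵀ * (A * Q)ᵀ := by
          rw [← Matrix.transpose_mul]; congr 1; simp only [mul_assoc]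
      _ = (A * P) * (A * Q) := by rw [p3, q3]
      _ = (A * P * A) * Q := by simp only [mul_assoc]
      _ = A * Q := by rw [p1]
  have h2 : Q * A = P * A := by
    calc Q * A = (Q * A)ᵀ := q4.symm
      _ = (Q * (A * P * A))ᵀ := by rw [p1]
      _ = (P * A)ᵀ * (Q * A)ᵀ := by
          rw [← Matrix.transpose_mul]; congr 1; simp only [mul_assoc]
      _ = (P * A) * (Q * A) := by rw [p4, q4]
      _ = P * (A * Q * A) := by simp only [mul_assoc]
      _ = P * A := by rw [q1]
  calc P = P * A * P := p2.symm
    _ = P * A * Q := by rw [mul_assoc, h1, ← mul_assoc]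
    _ = Q * A * Q := by rw [h2.symm]
    _ = Q := q2

lemma mp_transpose (A P : Matrix V V ℝ) (hA : Aᵀ = A) (hP : IsMoorePenrose A P) :
    IsMoorePenrose A Pᵀ := by
  obtain ⟨p1, p2, p3, p4⟩ := hP
  refine ⟨?_, ?_, ?_, ?_⟩
  · calc A * Pᵀ * A = (Aᵀ * P * Aᵀ)ᵀ := by simp [Matrix.transpose_mul, mul_assoc]
      _ = (A * P * A)ᵀ := by rw [hA]
      _ = Aᵀ := by rw [p1]
      _ = A := hA
  · calc Pᵀ * A * Pᵀ = (P * Aᵀ * P)ᵀ := by simp [Matrix.transpose_mul, mul_assoc]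
      _ = (P * A * P)ᵀ := by rw [hA]
      _ = Pᵀ := by rw [p2]
  · have e : A * Pᵀ = P * A := by
      calc A * Pᵀ = Aᵀ * Pᵀ := by rw [hA]
        _ = (P * A)ᵀ := (Matrix.transpose_mul _ _).symm
        _ = P * A := p4
    rw [e]; exact p4
  · have e : Pᵀ * A = A * P := by
      calc Pᵀ * A = Pᵀ * Aᵀ := by rw [hA]
        _ = (A * P)ᵀ := (Matrix.transpose_mul _ _).symm
        _ = A * P := p3
    rw [e]; exact p3

lemma isHermitian_of_transpose {A : Matrix V V ℝ} (h : Aᵀ = A) : A.IsHermitian := by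
  rw [Matrix.IsHermitian, Matrix.conjTranspose_eq_transpose_of_trivial, h]

lemma eigenvalue_le {M : Matrix V V ℝ} (hM : M.IsHermitian) (b : ℝ)
    (h : ∀ x : V → ℝ, x ⬝ᵥ M.mulVec x ≤ b * (x ⬝ᵥ x)) (i : V) :
    hM.eigenvalues i ≤ b := by
  set v : V → ℝ := ⇑(hM.eigenvectorBasis i) with hv
  have hnorm : ‖hM.eigenvectorBasis i‖ = 1 := hM.eigenvectorBasis.orthonormal.1 i
  have hvv : v ⬝ᵥ v = 1 := by
    have h1 : (inner ℝ (hM.eigenvectorBasis i) (hM.eigenvectorBasis i) : ℝ) = 1 := by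
      rw [real_inner_self_eq_norm_sq, hnorm]; norm_num
    rw [← h1, PiLp.inner_apply]
    simp [dotProduct, hv, RCLike.inner_apply, sq]
  have heig : v ⬝ᵥ M.mulVec v = hM.eigenvalues i := by
    rw [hv, hM.mulVec_eigenvectorBasis, dotProduct_smul]
    simp only [smul_eq_mul]
    rw [show ⇑(hM.eigenvectorBasis i) ⬝ᵥ ⇑(hM.eigenvectorBasis i) = (1:ℝ) from hvv]
    ring
  have := h v
  rw [heig, hvv, mul_one] at this
  exact this

lemma trace_eq_sum_eigenvalues {M : Matrix V V ℝ} (hM : M.IsHermitian) :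
    M.trace = ∑ i, hM.eigenvalues i := by
  have h1 : (star (hM.eigenvectorUnitary : Matrix V V ℝ)) *
      (hM.eigenvectorUnitary : Matrix V V ℝ) = 1 :=
    Matrix.mem_unitaryGroup_iff'.mp hM.eigenvectorUnitary.2
  conv_lhs => rw [hM.spectral_theorem, Unitary.conjStarAlgAut_apply]
  rw [Matrix.trace_mul_comm, ← mul_assoc, h1, one_mul, Matrix.trace_diagonal]
  simp

end Aux

section Aux2

variable {V : Type*} [Fintype V] [DecidableEq V]

lemma dotProduct_sum' {ι : Type*} (s : Finset ι) (x : V → ℝ) (g : ι → V → ℝ) :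
    x ⬝ᵥ (∑ i ∈ s, g i) = ∑ i ∈ s, x ⬝ᵥ g i := by
  simp only [dotProduct, Finset.sum_apply, Finset.mul_sum]
  rw [Finset.sum_comm]

lemma chi_neg (i j : V) (hij : i ≠ j) : chi i j = -chi j i := by
  funext k
  simp only [chi, Pi.neg_apply]
  split_ifs <;> simp_all

lemma chi_sub (i j i0 : V) (hi : i ≠ i0) (hj : j ≠ i0) (hij : i ≠ j) :
    chi i j = chi i i0 - chi j i0 := by
  funext k
  simp only [chi, Pi.sub_apply]
  split_ifs <;> simp_all

end Aux2

/-- If every edge `e` of a connected weighted graph `G` satisfies `R_e(G) * c_e ≥ δ`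
with `δ > 0`, then `G` is `(1/δ)`-uniformly sparse: every nonempty vertex subset `V'`
induces at most `(|V'| - 1)/δ` edges.  (Each unordered edge appears twice in
`V'.offDiag`.) -/
theorem stmt_14 {V : Type*} [Fintype V] [DecidableEq V]
    (G : SimpleGraph V) (hconn : G.Connected)
    (c : V → V → ℝ) (hsymm : ∀ i j, c i j = c j i)
    (hpos : ∀ i j, G.Adj i j → 0 < c i j)
    (hzero : ∀ i j, ¬ G.Adj i j → c i j = 0)
    (P : Matrix V V ℝ) (hP : IsMoorePenrose (Lap c) P)
    (δ : ℝ) (hδ : 0 < δ)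
    (hedge : ∀ i j, G.Adj i j → δ ≤ (chi i j ⬝ᵥ P.mulVec (chi i j)) * c i j)
    (V' : Finset V) (hne : V'.Nonempty) :
    ((V'.offDiag.filter fun p => G.Adj p.1 p.2).card : ℝ) / 2
      ≤ ((V'.card : ℝ) - 1) / δ := by
  have hdiag : ∀ i, c i i = 0 := fun i => hzero i i (G.irrefl)
  have hcnn : ∀ i j, 0 ≤ c i j := fun i j => by
    by_cases h : G.Adj i j
    · exact (hpos i j h).le
    · rw [hzero i j h]
  have hLt : (Lap c)ᵀ = Lap c := by
    ext i j
    simp only [Matrix.transpose_apply, Lap, Matrix.of_apply]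
    by_cases h : i = j
    · subst h; simp
    · simp [h, Ne.symm h, hsymm i j]
  obtain ⟨hP1, hP2, hP3, hP4⟩ := hP
  have hPt : Pᵀ = P :=
    mp_unique (Lap c) Pᵀ P (mp_transpose _ _ hLt ⟨hP1, hP2, hP3, hP4⟩) ⟨hP1, hP2, hP3, hP4⟩
  have hLq : ∀ x : V → ℝ, 0 ≤ x ⬝ᵥ (Lap c).mulVec x := fun x => by
    have h2 := lap_quad c hsymm hdiag x
    have h3 : 0 ≤ ∑ i, ∑ j, c i j * (x i - x j) ^ 2 :=
      Finset.sum_nonneg fun i _ => Finset.sum_nonneg fun j _ =>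
        mul_nonneg (hcnn i j) (sq_nonneg _)
    linarith
  have hPpsd : P.PosSemidef := by
    refine .of_dotProduct_mulVec_nonneg (isHermitian_of_transpose hPt) fun x => ?_
    rw [star_trivial]
    conv_rhs => rw [← hP2]
    rw [dot_sandwich P (Lap c) hPt]
    exact hLq _
  set S₀ := (open scoped MatrixOrder in CFC.sqrt P) with hS0def
  have hS0psd : S₀.PosSemidef := by open scoped MatrixOrder in exact (CFC.sqrt_nonneg P).posSemidef
  have hS0t : S₀ᵀ = S₀ := by
    have h := hS0psd.isHermitian
    rwa [Matrix.IsHermitian, Matrix.conjTranspose_eq_transpose_of_trivial] at h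
  have hSS : S₀ * S₀ = P := by open scoped MatrixOrder in exact CFC.sqrt_mul_sqrt_self P hPpsd.nonneg
  set S := V'.offDiag.filter (fun p => G.Adj p.1 p.2) with hSdef
  set N : Matrix V V ℝ := ∑ p ∈ S, c p.1 p.2 • vecMulVec (chi p.1 p.2) (chi p.1 p.2) with hNdef
  have hmemS : ∀ p : V × V, p ∈ S → p.1 ∈ V' ∧ p.2 ∈ V' ∧ p.1 ≠ p.2 ∧ G.Adj p.1 p.2 := by
    intro p hp
    obtain ⟨h1, h2⟩ := Finset.mem_filter.mp hp
    obtain ⟨ha, hb, hc⟩ := Finset.mem_offDiag.mp h1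
    exact ⟨ha, hb, hc, h2⟩
  have hNq : ∀ x : V → ℝ, x ⬝ᵥ N.mulVec x = ∑ p ∈ S, c p.1 p.2 * (x p.1 - x p.2) ^ 2 := by
    intro x
    rw [hNdef, _root_.sum_mulVec, dotProduct_sum']
    refine Finset.sum_congr rfl fun p hp => ?_
    obtain ⟨_, _, hp12, _⟩ := hmemS p hp
    rw [Matrix.smul_mulVec, _root_.vecMulVec_mulVec, dotProduct_smul,
      dotProduct_smul, chi_dot _ _ hp12 x, dotProduct_comm,
      chi_dot _ _ hp12 x]
    simp only [smul_eq_mul]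
    ring
  have hNle : ∀ x : V → ℝ, x ⬝ᵥ N.mulVec x ≤ 2 * (x ⬝ᵥ (Lap c).mulVec x) := by
    intro x
    rw [hNq x, lap_quad c hsymm hdiag x,
      show (∑ i, ∑ j, c i j * (x i - x j) ^ 2)
        = ∑ p : V × V, c p.1 p.2 * (x p.1 - x p.2) ^ 2 from (Fintype.sum_prod_type' _).symm]
    exact Finset.sum_le_sum_of_subset_of_nonneg (Finset.subset_univ S)
      (fun p _ _ => mul_nonneg (hcnn _ _) (sq_nonneg _))
  have htrPN : Matrix.trace (P * N)
      = ∑ p ∈ S, c p.1 p.2 * (chi p.1 p.2 ⬝ᵥ P.mulVec (chi p.1 p.2)) := by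
    rw [hNdef, Finset.mul_sum, Matrix.trace_sum]
    refine Finset.sum_congr rfl fun p hp => ?_
    rw [mul_smul_comm, Matrix.trace_smul, trace_mul_vecMulVec]
    simp [smul_eq_mul]
  have hlow : δ * S.card ≤ Matrix.trace (P * N) := by
    rw [htrPN]
    calc δ * S.card = ∑ _p ∈ S, δ := by rw [Finset.sum_const, nsmul_eq_mul, mul_comm]
      _ ≤ ∑ p ∈ S, c p.1 p.2 * (chi p.1 p.2 ⬝ᵥ P.mulVec (chi p.1 p.2)) := by
          refine Finset.sum_le_sum fun p hp => ?_
          obtain ⟨_, _, _, hadj⟩ := hmemS p hp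
          have h := hedge p.1 p.2 hadj
          linarith [mul_comm (chi p.1 p.2 ⬝ᵥ P.mulVec (chi p.1 p.2)) (c p.1 p.2)]
  set M := S₀ * N * S₀ with hMdef
  have hNt : Nᵀ = N := by
    rw [hNdef, Matrix.transpose_sum]
    refine Finset.sum_congr rfl fun p _ => ?_
    rw [Matrix.transpose_smul]
    congr 1
    ext i j
    simp [Matrix.vecMulVec, mul_comm]
  have hNpsd : N.PosSemidef := by
    refine .of_dotProduct_mulVec_nonneg (isHermitian_of_transpose hNt) fun x => ?_
    rw [star_trivial, hNq]
    exact Finset.sum_nonneg fun p _ => mul_nonneg (hcnn _ _) (sq_nonneg _)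
  have hMpsd : M.PosSemidef := by
    have h := hNpsd.mul_mul_conjTranspose_same S₀
    rwa [show S₀ᴴ = S₀ from hS0psd.isHermitian] at h
  have htrM : Matrix.trace (P * N) = Matrix.trace M := by
    rw [hMdef, ← hSS, mul_assoc, Matrix.trace_mul_comm]
  set Pr := S₀ * (Lap c) * S₀ with hPrdef
  have hPrIdem : Pr * Pr = Pr := by
    calc Pr * Pr = S₀ * (Lap c * (S₀ * S₀) * Lap c) * S₀ := by
          simp only [hPrdef, mul_assoc]
      _ = S₀ * (Lap c * P * Lap c) * S₀ := by rw [hSS]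
      _ = Pr := by rw [hP1, hPrdef]
  have hPrt : Prᵀ = Pr := by
    rw [hPrdef]
    simp [Matrix.transpose_mul, hS0t, hLt, mul_assoc]
  have hPrq : ∀ x : V → ℝ, 0 ≤ x ⬝ᵥ Pr.mulVec x := fun x => by
    rw [hPrdef, dot_sandwich _ _ hS0t]
    exact hLq _
  have hMle : ∀ x : V → ℝ, x ⬝ᵥ M.mulVec x ≤ 2 * (x ⬝ᵥ x) := by
    intro x
    have h1 : x ⬝ᵥ M.mulVec x = (S₀.mulVec x) ⬝ᵥ N.mulVec (S₀.mulVec x) :=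
      dot_sandwich S₀ N hS0t x
    have h2 : x ⬝ᵥ Pr.mulVec x = (S₀.mulVec x) ⬝ᵥ (Lap c).mulVec (S₀.mulVec x) :=
      dot_sandwich S₀ _ hS0t x
    have h3 := hNle (S₀.mulVec x)
    have h4 := proj_dot_le Pr hPrt hPrIdem hPrq x
    linarith
  have hMH : M.IsHermitian := hMpsd.isHermitian
  have hev_le : ∀ i, hMH.eigenvalues i ≤ 2 :=
    eigenvalue_le hMH 2 (fun x => hMle x)
  have hev_nonneg : ∀ i, 0 ≤ hMH.eigenvalues i := fun i => hMpsd.eigenvalues_nonneg i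
  have htrace : Matrix.trace M = ∑ i, hMH.eigenvalues i := trace_eq_sum_eigenvalues hMH
  have hsum_rank : ∑ i, hMH.eigenvalues i ≤ 2 * (M.rank : ℝ) := by
    have h1 : ∑ i, hMH.eigenvalues i ≤ ∑ i, (if hMH.eigenvalues i ≠ 0 then (2:ℝ) else 0) := by
      refine Finset.sum_le_sum fun i _ => ?_
      by_cases h : hMH.eigenvalues i = 0
      · simp [h]
      · simp only [h, ne_eq, not_false_eq_true, if_true]
        exact hev_le i
    have h2 : ∑ i, (if hMH.eigenvalues i ≠ 0 then (2:ℝ) else 0)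
        = 2 * ((Finset.univ.filter fun i => hMH.eigenvalues i ≠ 0).card : ℝ) := by
      rw [← Finset.sum_filter, Finset.sum_const, nsmul_eq_mul, mul_comm]
    have h3 : (Finset.univ.filter fun i => hMH.eigenvalues i ≠ 0).card = M.rank := by
      rw [hMH.rank_eq_card_non_zero_eigs, Fintype.card_subtype]
    rw [← h3]
    calc ∑ i, hMH.eigenvalues i ≤ _ := h1
      _ = _ := h2
  have hrank1 : M.rank ≤ N.rank :=
    le_trans (Matrix.rank_mul_le_left _ _) (Matrix.rank_mul_le_right _ _)
  obtain ⟨i0, hi0⟩ := hne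
  have hcard1 : 1 ≤ V'.card := Finset.card_pos.mpr ⟨i0, hi0⟩
  have hrank2 : N.rank ≤ V'.card - 1 := by
    set T : Finset (V → ℝ) := (V'.erase i0).image (fun j => chi j i0) with hT
    have hchimem : ∀ j, j ∈ V' → j ≠ i0 → chi j i0 ∈ Submodule.span ℝ (T : Set (V → ℝ)) := by
      intro j hj hji
      apply Submodule.subset_span
      rw [hT]
      simp only [Finset.coe_image, Set.mem_image, Finset.mem_coe]
      exact ⟨j, Finset.mem_erase.mpr ⟨hji, hj⟩, rfl⟩
    have hspan : LinearMap.range N.mulVecLin ≤ Submodule.span ℝ (T : Set (V → ℝ)) := by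
      rintro y ⟨x, rfl⟩
      rw [Matrix.mulVecLin_apply, hNdef, _root_.sum_mulVec]
      refine Submodule.sum_mem _ fun p hp => ?_
      obtain ⟨hp1, hp2, hp12, _⟩ := hmemS p hp
      rw [Matrix.smul_mulVec, _root_.vecMulVec_mulVec]
      refine Submodule.smul_mem _ _ (Submodule.smul_mem _ _ ?_)
      by_cases h1 : p.1 = i0
      · by_cases h2 : p.2 = i0
        · exact absurd (h1.trans h2.symm) hp12
        · rw [chi_neg p.1 p.2 hp12, h1]
          exact Submodule.neg_mem _ (hchimem p.2 hp2 h2)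
      · by_cases h2 : p.2 = i0
        · rw [h2]
          exact hchimem p.1 hp1 h1
        · rw [chi_sub p.1 p.2 i0 h1 h2 hp12]
          exact Submodule.sub_mem _ (hchimem _ hp1 h1) (hchimem _ hp2 h2)
    calc N.rank = Module.finrank ℝ (LinearMap.range N.mulVecLin) := rfl
      _ ≤ Module.finrank ℝ (Submodule.span ℝ (T : Set (V → ℝ))) := Submodule.finrank_mono hspan
      _ ≤ T.card := finrank_span_finset_le_card T
      _ ≤ (V'.erase i0).card := Finset.card_image_le
      _ = V'.card - 1 := Finset.card_erase_of_mem hi0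
  have hrankcast : (M.rank : ℝ) ≤ (V'.card : ℝ) - 1 := by
    have h : (M.rank : ℝ) ≤ ((V'.card - 1 : ℕ) : ℝ) :=
      Nat.cast_le.mpr (le_trans hrank1 hrank2)
    rwa [Nat.cast_sub hcard1, Nat.cast_one] at h
  rw [div_le_div_iff₀ two_pos hδ]
  have hScard : (S.card : ℝ) = ((V'.offDiag.filter fun p => G.Adj p.1 p.2).card : ℝ) := by
    rw [hSdef]
  nlinarith [hlow, htrM, htrace, hsum_rank, hrankcast, hδ.le]
end
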